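/- Let r ≥ 1 and i_0 ≥ 0 be integers. Suppose δ_{r−1}(i+1) ≤ δ_{r−1}(i) for every i ≥ i_0, and suppose there is an integer i' > i_0 with δ_r(i') < δ_r(i'−1). Then δ_r(i+1) ≤ δ_r(i) for every i ≥ i'; that is, once δ_r strictly decreases after the point where δ_{r−1} has become non-increasing, δ_r remains non-increasing forever. -/

import Mathlib

/-- `pp i` is the `i`-th prime (`pp 0 = 2`, `pp 1 = 3`, `pp 2 = 5`, ...). -/
noncomputable def pp (i : ℕ) : ℕ := Nat.nth Nat.Prime i

/-- `PP i = p₀ · p₁ ⋯ p_i`, the product of the first `i+1` primes. -/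
noncomputable def PP (i : ℕ) : ℕ := ∏ j ∈ Finset.range (i + 1), pp j

/-- `del r i` is the density `δ_r(i)` of positive integers having exactly `r`
prime divisors among `p₀, ..., p_i`: the proportion of `x ∈ {1, ..., PP i}`
divisible by exactly `r` of the primes `p₀, ..., p_i`. -/
noncomputable def del (r i : ℕ) : ℚ :=
  (((Finset.Icc 1 (PP i)).filter
      (fun x => ((Finset.range (i + 1)).filter (fun j => pp j ∣ x)).card = r)).card : ℚ) /
    (PP i : ℚ)

/-- `dd k i` is the density `d_k(p_i)` of positive integers whose `k`-th smallest
prime factor is `p_i`: the proportion of `x ∈ {1, ..., PP i}` divisible by `p_i`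
and by exactly `k-1` of the primes `p₀, ..., p_{i-1}`. -/
noncomputable def dd (k i : ℕ) : ℚ :=
  (((Finset.Icc 1 (PP i)).filter
      (fun x => pp i ∣ x ∧
        ((Finset.range i).filter (fun j => pp j ∣ x)).card = k - 1)).card : ℚ) /
    (PP i : ℚ)

lemma pp_prime (i : ℕ) : (pp i).Prime := Nat.prime_nth_prime i
lemma pp_lt {i j : ℕ} (h : i < j) : pp i < pp j :=
  (Nat.nth_lt_nth Nat.infinite_setOf_prime).mpr h
lemma PP_pos (i : ℕ) : 0 < PP i :=
  Finset.prod_pos (fun j _ => (pp_prime j).pos)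
lemma PP_succ (i : ℕ) : PP (i+1) = PP i * pp (i+1) := Finset.prod_range_succ _ _
lemma not_dvd_PP (i : ℕ) : ¬ pp (i+1) ∣ PP i := by
  intro h
  obtain ⟨j, hj, hdvd⟩ := (Nat.Prime.prime (pp_prime (i+1))).exists_mem_finset_dvd h
  have := ((Nat.prime_dvd_prime_iff_eq (pp_prime (i+1)) (pp_prime j)).mp hdvd)
  have hlt : pp j < pp (i+1) := pp_lt (by simpa using Finset.mem_range.mp hj)
  omega
lemma pp_dvd_PP {j i : ℕ} (h : j ≤ i) : pp j ∣ PP i :=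
  Finset.dvd_prod_of_mem _ (Finset.mem_range.mpr (by omega))

lemma rep_lemma (n x : ℕ) (hn : 0 < n) (hx : 1 ≤ x) :
    ((x-1)/n)*n ≤ x - 1 ∧ x - 1 < ((x-1)/n)*n + n := by
  constructor
  · exact Nat.div_mul_le_self _ _
  · have := (Nat.div_lt_iff_lt_mul hn).mp (Nat.lt_succ_self ((x-1)/n))
    calc x - 1 < ((x-1)/n + 1) * n := this
      _ = ((x-1)/n)*n + n := by ring

/-- Counting over `[1, n*p]` by fibers over `[1, n]`. -/
lemma count_Icc_mul (n p : ℕ) (hn : 0 < n) (P : ℕ → Prop) [DecidablePred P] :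
    ((Finset.Icc 1 (n*p)).filter P).card
      = ∑ a ∈ Finset.Icc 1 n, ((Finset.range p).filter (fun t => P (a + t*n))).card := by
  rw [Finset.card_eq_sum_card_fiberwise
    (f := fun x => x - ((x-1)/n)*n) (t := Finset.Icc 1 n) ?_]
  · refine Finset.sum_congr rfl (fun a ha => ?_)
    simp only [Finset.mem_Icc] at ha
    apply Finset.card_nbij' (i := fun x => (x-1)/n) (j := fun t => a + t*n)
    · intro x hx
      simp only [Finset.mem_coe, Finset.mem_filter, Finset.mem_Icc, Finset.mem_range] at hx ⊢
      obtain ⟨⟨⟨hx1, hx2⟩, hP⟩, hfib⟩ := hx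
      obtain ⟨h1, h2⟩ := rep_lemma n x hn hx1
      have hx' : x = a + ((x-1)/n)*n := by omega
      constructor
      · by_contra hle
        push_neg at hle
        have h3 : p * n ≤ ((x-1)/n) * n := Nat.mul_le_mul_right n hle
        have h4 : n * p = p * n := Nat.mul_comm n p
        omega
      · rw [← hx']; exact hP
    · intro t ht
      simp only [Finset.mem_coe, Finset.mem_filter, Finset.mem_Icc, Finset.mem_range] at ht ⊢
      obtain ⟨ht, hP⟩ := ht
      have key : (a + t*n - 1)/n = t := by
        have h : a + t*n - 1 = (a-1) + t*n := by omega
        rw [h, Nat.add_mul_div_right _ _ hn, Nat.div_eq_of_lt (by omega)]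
        omega
      have hub : a + t*n ≤ n*p := by
        have h1 : t + 1 ≤ p := ht
        calc a + t*n ≤ n + t*n := by omega
          _ = (t+1)*n := by ring
          _ ≤ p*n := Nat.mul_le_mul_right n h1
          _ = n*p := Nat.mul_comm _ _
      exact ⟨⟨⟨by omega, hub⟩, hP⟩, by rw [key]; omega⟩
    · intro x hx
      simp only [Finset.mem_coe, Finset.mem_filter, Finset.mem_Icc] at hx
      obtain ⟨⟨⟨hx1, hx2⟩, hP⟩, hfib⟩ := hx
      obtain ⟨h1, h2⟩ := rep_lemma n x hn hx1
      beta_reduce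
      omega
    · intro t ht
      simp only [Finset.mem_coe, Finset.mem_filter, Finset.mem_range] at ht
      have h : a + t*n - 1 = (a-1) + t*n := by omega
      beta_reduce
      rw [h, Nat.add_mul_div_right _ _ hn, Nat.div_eq_of_lt (by omega)]
      omega
  · intro x hx
    simp only [Finset.mem_coe, Finset.mem_filter, Finset.mem_Icc] at hx ⊢
    obtain ⟨⟨hx1, hx2⟩, hP⟩ := hx
    obtain ⟨h1, h2⟩ := rep_lemma n x hn hx1
    omega

lemma count_dvd_block (p n a : ℕ) (hp : p.Prime) (hnd : ¬ p ∣ n) :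
    ((Finset.range p).filter (fun t => p ∣ a + t*n)).card = 1 := by
  haveI : Fact p.Prime := ⟨hp⟩
  have hn0 : (n : ZMod p) ≠ 0 := by
    simpa [ZMod.natCast_eq_zero_iff] using hnd
  set z : ZMod p := (-(a : ZMod p)) * (n : ZMod p)⁻¹ with hz
  rw [Finset.card_eq_one]
  refine ⟨z.val, ?_⟩
  ext t
  simp only [Finset.mem_filter, Finset.mem_range, Finset.mem_singleton]
  constructor
  · rintro ⟨htp, hdvd⟩
    have h0 : ((a + t*n : ℕ) : ZMod p) = 0 := (ZMod.natCast_eq_zero_iff _ _).mpr hdvd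
    push_cast at h0
    have ht : (t : ZMod p) = z := by
      rw [hz, eq_mul_inv_iff_mul_eq₀ hn0]
      linear_combination h0
    have := congrArg ZMod.val ht
    rwa [ZMod.val_natCast_of_lt htp] at this
  · rintro rfl
    refine ⟨ZMod.val_lt z, ?_⟩
    rw [← ZMod.natCast_eq_zero_iff]
    push_cast
    rw [ZMod.natCast_val, ZMod.cast_id, hz]
    field_simp
    ring

/-- Number of `x ∈ [1, PP i]` with exactly `r` prime divisors among `p₀,...,p_i`. -/
noncomputable def Nc (r i : ℕ) : ℕ :=
  ((Finset.Icc 1 (PP i)).filter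
      (fun x => ((Finset.range (i + 1)).filter (fun j => pp j ∣ x)).card = r)).card

lemma del_eq (r i : ℕ) : del r i = (Nc r i : ℚ) / (PP i : ℚ) := rfl

lemma card_split (i x : ℕ) :
    ((Finset.range (i+2)).filter (fun j => pp j ∣ x)).card
      = ((Finset.range (i+1)).filter (fun j => pp j ∣ x)).card
        + (if pp (i+1) ∣ x then 1 else 0) := by
  rw [Finset.range_add_one, Finset.filter_insert]
  by_cases hd : pp (i+1) ∣ x
  · rw [if_pos hd, Finset.card_insert_of_notMem (by simp), if_pos hd]
  · rw [if_neg hd, if_neg hd]; omega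

lemma dvd_shift {j i : ℕ} (hj : j ≤ i) (a t : ℕ) :
    pp j ∣ a + t * PP i ↔ pp j ∣ a := by
  have h : pp j ∣ t * PP i := Dvd.dvd.mul_left (pp_dvd_PP hj) t
  refine ⟨fun hd => ?_, fun hd => hd.add h⟩
  have h2 := Nat.dvd_sub hd h
  simpa using h2

lemma card_shift (i a t : ℕ) :
    ((Finset.range (i+1)).filter (fun j => pp j ∣ a + t * PP i)).card
      = ((Finset.range (i+1)).filter (fun j => pp j ∣ a)).card := by
  congr 1
  apply Finset.filter_congr
  intro j hj
  simp only [Finset.mem_range] at hj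
  simp [dvd_shift (by omega : j ≤ i) a t]

lemma Nc_succ (r i : ℕ) (hr : 1 ≤ r) :
    Nc r (i+1) = Nc r i * (pp (i+1) - 1) + Nc (r-1) i := by
  set n := PP i with hn
  set p := pp (i+1) with hp
  have hn0 : 0 < n := PP_pos i
  have hpp : p.Prime := pp_prime (i+1)
  have hnd : ¬ p ∣ n := not_dvd_PP i
  have step1 : Nc r (i+1)
      = ∑ a ∈ Finset.Icc 1 n, ((Finset.range p).filter
          (fun t => ((Finset.range (i+2)).filter (fun j => pp j ∣ a + t*n)).card = r)).card := by
    unfold Nc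
    rw [PP_succ i]
    exact count_Icc_mul n p hn0 _
  rw [step1]
  have inner : ∀ a ∈ Finset.Icc 1 n,
      ((Finset.range p).filter
          (fun t => ((Finset.range (i+2)).filter (fun j => pp j ∣ a + t*n)).card = r)).card
      = (if ((Finset.range (i+1)).filter (fun j => pp j ∣ a)).card = r then p - 1 else 0)
        + (if ((Finset.range (i+1)).filter (fun j => pp j ∣ a)).card = r - 1 then 1 else 0) := by
    intro a _
    set c := ((Finset.range (i+1)).filter (fun j => pp j ∣ a)).card with hc
    have cond : ∀ t, (((Finset.range (i+2)).filter (fun j => pp j ∣ a + t*n)).card = r)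
        ↔ (c + (if p ∣ a + t*n then 1 else 0) = r) := by
      intro t
      rw [card_split, card_shift]
    have hsplit := Finset.card_filter_add_card_filter_not
      (s := Finset.range p) (p := fun t => p ∣ a + t*n)
    have hone := count_dvd_block p n a hpp hnd
    by_cases hA : c = r
    · have hB : ¬ (c = r - 1) := by omega
      simp only [if_pos hA, if_neg hB, add_zero]
      have : ((Finset.range p).filter
          (fun t => ((Finset.range (i+2)).filter (fun j => pp j ∣ a + t*n)).card = r)).card
        = ((Finset.range p).filter (fun t => ¬ p ∣ a + t*n)).card := by
        congr 1
        apply Finset.filter_congr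
        intro t _
        simp only [cond t]
        constructor
        · intro h hd
          rw [if_pos hd] at h; omega
        · intro hd
          rw [if_neg hd]; omega
      rw [this]
      have hcard : (Finset.range p).card = p := Finset.card_range p
      omega
    · by_cases hB : c = r - 1
      · simp only [if_neg hA, if_pos hB, zero_add]
        have : ((Finset.range p).filter
            (fun t => ((Finset.range (i+2)).filter (fun j => pp j ∣ a + t*n)).card = r)).card
          = ((Finset.range p).filter (fun t => p ∣ a + t*n)).card := by
          congr 1
          apply Finset.filter_congr
          intro t _
          simp only [cond t]
          constructor
          · intro h
            by_contra hd
            rw [if_neg hd] at h; omega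
          · intro hd
            rw [if_pos hd]; omega
        rw [this, hone]
      · simp only [if_neg hA, if_neg hB, add_zero]
        convert Finset.card_empty
        rw [Finset.filter_eq_empty_iff]
        intro t _
        rw [cond t]
        split <;> omega
  rw [Finset.sum_congr rfl inner, Finset.sum_add_distrib]
  rw [← Finset.sum_filter, ← Finset.sum_filter]
  rw [Finset.sum_const, Finset.sum_const, smul_eq_mul, smul_eq_mul, mul_one]
  rfl

lemma del_succ (r i : ℕ) (hr : 1 ≤ r) :
    del r (i+1) = (del r i * ((pp (i+1) : ℚ) - 1) + del (r-1) i) / (pp (i+1) : ℚ) := by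
  have hq2 : 2 ≤ pp (i+1) := (pp_prime (i+1)).two_le
  have hn0 : ((PP i : ℚ)) ≠ 0 := by
    exact_mod_cast (PP_pos i).ne'
  have hq0 : ((pp (i+1) : ℚ)) ≠ 0 := by
    have : 0 < pp (i+1) := by omega
    exact_mod_cast this.ne'
  rw [del_eq, del_eq, del_eq, Nc_succ r i hr, PP_succ i]
  have hcast : ((Nc r i * (pp (i+1) - 1) + Nc (r-1) i : ℕ) : ℚ)
      = (Nc r i : ℚ) * ((pp (i+1) : ℚ) - 1) + (Nc (r-1) i : ℚ) := by
    push_cast [Nat.cast_sub (by omega : 1 ≤ pp (i+1))]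
    ring
  rw [hcast]
  push_cast
  field_simp
  try ring


/-- If `δ_{r−1}` is non-increasing from `i₀` on, and `δ_r` strictly decreases at
some `i' > i₀`, then `δ_r` is non-increasing from `i'` on. -/
theorem del_eventually_nonincreasing (r i₀ i' : ℕ) (hr : 1 ≤ r)
    (h₁ : ∀ i : ℕ, i₀ ≤ i → del (r - 1) (i + 1) ≤ del (r - 1) i)
    (h₂ : i₀ < i') (h₃ : del r i' < del r (i' - 1)) :
    ∀ i : ℕ, i' ≤ i → del r (i + 1) ≤ del r i := by
  have hq : ∀ i : ℕ, (2 : ℚ) ≤ (pp (i+1) : ℚ) := fun i => by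
    exact_mod_cast (pp_prime (i+1)).two_le
  -- basic consequences of the recurrence
  have key_le : ∀ i : ℕ, del (r-1) i ≤ del r i → del r (i+1) ≤ del r i := by
    intro i h
    rw [del_succ r i hr]
    have hqi := hq i
    rw [div_le_iff₀ (by linarith)]
    nlinarith
  have key_ge : ∀ i : ℕ, del (r-1) i ≤ del r i → del (r-1) i ≤ del r (i+1) := by
    intro i h
    rw [del_succ r i hr]
    have hqi := hq i
    rw [le_div_iff₀ (by linarith)]
    nlinarith
  have key_lt : ∀ i : ℕ, del r (i+1) < del r i → del (r-1) i < del r i := by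
    intro i h
    by_contra hc
    push_neg at hc
    rw [del_succ r i hr] at h
    have hqi := hq i
    rw [div_lt_iff₀ (by linarith)] at h
    nlinarith
  -- set j := i' - 1
  have hi1 : 1 ≤ i' := by omega
  set j := i' - 1 with hj
  have hij : i' = j + 1 := by omega
  have hbase : del (r-1) j ≤ del r j := by
    apply le_of_lt
    apply key_lt
    rw [← hij]
    exact h₃
  have hinv : ∀ i : ℕ, j ≤ i → del (r-1) i ≤ del r i := by
    intro i hi
    induction i with
    | zero =>
      have : j = 0 := by omega
      rwa [← this]
    | succ m ih =>
      rcases Nat.lt_or_ge j (m+1) with hlt | hge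
      · have hm : j ≤ m := by omega
        have ihm := ih hm
        have h1 : del (r-1) (m+1) ≤ del (r-1) m := h₁ m (by omega)
        have h2 : del (r-1) m ≤ del r (m+1) := key_ge m ihm
        linarith
      · have : j = m + 1 := by omega
        rwa [← this]
  intro i hi
  exact key_le i (hinv i (by omega))
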